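/- Let p be a prime and let (G,q) be an anisotropic pre-metric group such that q(g)^p = 1 for all g ∈ G. Then pG = 0 (so G is an 𝔽_p-vector space) and |G| ≤ p². -/
import Mathlib


/-- The bicharacter associated with a `kˣ`-valued function `q` on `G`:
`b(g,h) = q(g+h) · q(g)⁻¹ · q(h)⁻¹`. -/
def bchar {k : Type*} [Field k] {G : Type*} [AddCommGroup G] (q : G → kˣ) (g h : G) : kˣ :=
  q (g + h) * (q g)⁻¹ * (q h)⁻¹

/-- `q : G → kˣ` is a quadratic form: `q (-g) = q g` for all `g`, and the associated
function `bchar q` is bimultiplicative. -/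
structure IsQuadForm {k : Type*} [Field k] {G : Type*} [AddCommGroup G] (q : G → kˣ) : Prop where
  map_neg : ∀ g : G, q (-g) = q g
  bchar_add_left : ∀ g₁ g₂ h : G, bchar q (g₁ + g₂) h = bchar q g₁ h * bchar q g₂ h
  bchar_add_right : ∀ g h₁ h₂ : G, bchar q g (h₁ + h₂) = bchar q g h₁ * bchar q g h₂

/-- The Gauss sum `τ⁺(G,q) = ∑_{g ∈ G} q(g)`, as an element of `k`. -/
noncomputable def tauPlus {k : Type*} [Field k] {G : Type*} [AddCommGroup G] (q : G → kˣ) : k :=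
  ∑ᶠ g : G, (q g : k)

/-- The Gauss sum `τ⁻(G,q) = ∑_{g ∈ G} q(g)⁻¹`, as an element of `k`. -/
noncomputable def tauMinus {k : Type*} [Field k] {G : Type*} [AddCommGroup G] (q : G → kˣ) : k :=
  ∑ᶠ g : G, (((q g)⁻¹ : kˣ) : k)

/-- Non-degeneracy of (the bicharacter associated with) `q` : the map
`g ↦ b(g, ·)` from `G` to `Hom(G, kˣ)` is injective. -/
def Nondeg {k : Type*} [Field k] {G : Type*} [AddCommGroup G] (q : G → kˣ) : Prop :=
  Function.Injective fun g : G => fun h : G => bchar q g h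

/-- Isomorphism of pre-metric groups: a group isomorphism `φ : G₁ ≃ G₂`
with `q₂ ∘ φ = q₁`. -/
def PMIso {k : Type*} [Field k] {G₁ : Type*} [AddCommGroup G₁] {G₂ : Type*} [AddCommGroup G₂]
    (q₁ : G₁ → kˣ) (q₂ : G₂ → kˣ) : Prop :=
  ∃ φ : G₁ ≃+ G₂, ∀ g : G₁, q₂ (φ g) = q₁ g


section Aux

variable {k : Type*} [Field k] {G : Type*} [AddCommGroup G] {q : G → kˣ}

private lemma bchar_zero_left' (hq : IsQuadForm q) (h : G) : bchar q 0 h = 1 := by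
  have h1 := hq.bchar_add_left 0 0 h
  rw [add_zero] at h1
  nth_rewrite 1 [← mul_one (bchar q 0 h)] at h1
  exact (mul_left_cancel h1).symm

private lemma bchar_zero_right' (hq : IsQuadForm q) (g : G) : bchar q g 0 = 1 := by
  have h1 := hq.bchar_add_right g 0 0
  rw [add_zero] at h1
  nth_rewrite 1 [← mul_one (bchar q g 0)] at h1
  exact (mul_left_cancel h1).symm

private lemma q_zero' (hq : IsQuadForm q) : q 0 = 1 := by
  have h0 := bchar_zero_left' hq (0 : G)
  unfold bchar at h0
  rw [add_zero, mul_inv_cancel, one_mul, inv_eq_one] at h0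
  exact h0

private lemma q_add' (q : G → kˣ) (g h : G) : q (g + h) = q g * q h * bchar q g h := by
  unfold bchar
  have key : ∀ a b c : kˣ, a * b * (c * a⁻¹ * b⁻¹) = c := by
    intro a b c
    simp [mul_comm, mul_left_comm, mul_assoc]
  exact (key (q g) (q h) (q (g + h))).symm

private lemma bchar_comm' (q : G → kˣ) (g h : G) : bchar q g h = bchar q h g := by
  unfold bchar; rw [add_comm]; exact mul_right_comm _ _ _

private lemma bchar_self' (hq : IsQuadForm q) (g : G) : bchar q g g = q g * q g := by
  have h1 := hq.bchar_add_right g g (-g)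
  rw [add_neg_cancel, bchar_zero_right' hq] at h1
  have h2 : bchar q g (-g) = (q g)⁻¹ * (q g)⁻¹ := by
    unfold bchar
    rw [add_neg_cancel, q_zero' hq, hq.map_neg, one_mul]
  rw [h2] at h1
  calc bchar q g g = bchar q g g * ((q g)⁻¹ * (q g)⁻¹) * (q g * q g) := by group
    _ = 1 * (q g * q g) := by rw [← h1]
    _ = q g * q g := one_mul _

private lemma bchar_nsmul_left' (hq : IsQuadForm q) (n : ℕ) (g h : G) :
    bchar q (n • g) h = bchar q g h ^ n := by
  induction n with
  | zero => rw [zero_smul, bchar_zero_left' hq, pow_zero]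
  | succ n ih => rw [succ_nsmul, hq.bchar_add_left, ih, pow_succ]

private lemma bchar_nsmul_right' (hq : IsQuadForm q) (n : ℕ) (g h : G) :
    bchar q g (n • h) = bchar q g h ^ n := by
  induction n with
  | zero => rw [zero_smul, bchar_zero_right' hq, pow_zero]
  | succ n ih => rw [succ_nsmul, hq.bchar_add_right, ih, pow_succ]

private lemma q_nsmul' (hq : IsQuadForm q) (n : ℕ) (g : G) :
    q (n • g) = q g ^ (n * n) := by
  induction n with
  | zero => rw [zero_smul, Nat.zero_mul, pow_zero, q_zero' hq]
  | succ n ih =>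
    rw [succ_nsmul, q_add' q, ih, bchar_nsmul_left' hq, bchar_self' hq]
    calc q g ^ (n * n) * q g * (q g * q g) ^ n
        = q g ^ (n * n) * q g ^ 1 * (q g ^ 2) ^ n := by rw [pow_one, sq]
      _ = q g ^ (n * n + 1 + 2 * n) := by rw [← pow_mul, ← pow_add, ← pow_add]
      _ = q g ^ ((n + 1) * (n + 1)) := by congr 1; ring

private lemma sq_mod_cases {p x y : ℕ} (hp : p.Prime) (hx : x < p) (hy : y < p)
    (h : x * x ≡ y * y [MOD p]) : x = y ∨ x + y = p := by
  have hd : (p : ℤ) ∣ ((y : ℤ) - x) * ((y : ℤ) + x) := by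
    have h2 := h.dvd
    have e : ((y : ℤ) - x) * ((y : ℤ) + x) = ((y * y : ℕ) : ℤ) - ((x * x : ℕ) : ℤ) := by
      push_cast; ring
    rw [e]; exact_mod_cast h2
  rcases (Nat.prime_iff_prime_int.mp hp).dvd_mul.mp hd with h1 | h1
  · left
    by_contra hne
    have hne' : (y : ℤ) - x ≠ 0 := by
      intro hz; apply hne; omega
    have hle := Int.le_of_dvd (abs_pos.mpr hne') ((dvd_abs _ _).mpr h1)
    have habs : |(y : ℤ) - x| < p := abs_lt.mpr ⟨by omega, by omega⟩
    omega
  · have h2 : p ∣ y + x := by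
      have e : ((y : ℤ) + x) = ((y + x : ℕ) : ℤ) := by push_cast; ring
      rw [e] at h1
      exact_mod_cast h1
    obtain ⟨c, hc⟩ := h2
    have hc2 : c < 2 := by
      by_contra hcc
      push_neg at hcc
      nlinarith [hp.pos]
    interval_cases c <;> omega

end Aux

section Aux2

variable {k : Type*} [Field k] {G : Type*} [AddCommGroup G] {q : G → kˣ}

private lemma exists_perp' [Fintype G] (hq : IsQuadForm q) {p : ℕ} (hp : p.Prime)
    (hb : ∀ g h : G, bchar q g h ^ p = 1)
    (hcard : p ^ 2 < Fintype.card G) (u v : G) :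
    ∃ w : G, w ≠ 0 ∧ bchar q u w = 1 ∧ bchar q v w = 1 := by
  classical
  set T : Finset k := (Polynomial.nthRoots p (1 : k)).toFinset with hT
  have hTcard : T.card ≤ p :=
    le_trans (Multiset.toFinset_card_le _) (Polynomial.card_nthRoots p 1)
  have hmem : ∀ x : kˣ, x ^ p = 1 → (x : k) ∈ T := by
    intro x hx
    rw [hT, Multiset.mem_toFinset, Polynomial.mem_nthRoots hp.pos]
    have h1 : ((x ^ p : kˣ) : k) = 1 := by rw [hx, Units.val_one]
    simpa [Units.val_pow_eq_pow_val] using h1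
  have hcard2 : (T ×ˢ T).card < (Finset.univ : Finset G).card := by
    rw [Finset.card_univ, Finset.card_product]
    calc T.card * T.card ≤ p * p := Nat.mul_le_mul hTcard hTcard
      _ = p ^ 2 := (sq p).symm
      _ < Fintype.card G := hcard
  obtain ⟨a, -, b, -, hab, heq⟩ :=
    Finset.exists_ne_map_eq_of_card_lt_of_maps_to hcard2
      (f := fun g : G => (((bchar q u g : kˣ) : k), ((bchar q v g : kˣ) : k)))
      (fun g _ => Finset.mem_product.mpr ⟨hmem _ (hb u g), hmem _ (hb v g)⟩)
  have h1 : bchar q u a = bchar q u b := Units.ext (congrArg Prod.fst heq)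
  have h2 : bchar q v a = bchar q v b := Units.ext (congrArg Prod.snd heq)
  refine ⟨a - b, sub_ne_zero.mpr hab, ?_, ?_⟩
  · have h3 : bchar q u (a - b) * bchar q u b = bchar q u a := by
      rw [← hq.bchar_add_right, sub_add_cancel]
    rw [h1] at h3
    nth_rewrite 2 [← one_mul (bchar q u b)] at h3
    exact mul_right_cancel h3
  · have h3 : bchar q v (a - b) * bchar q v b = bchar q v a := by
      rw [← hq.bchar_add_right, sub_add_cancel]
    rw [h2] at h3
    nth_rewrite 2 [← one_mul (bchar q v b)] at h3
    exact mul_right_cancel h3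

private lemma image_card_big [DecidableEq k] {p : ℕ} (hp : p.Prime) {a : kˣ} (t : kˣ)
    (ho : orderOf a = p) :
    p ≤ 2 * ((Finset.range p).image (fun x : ℕ => ((a ^ (x * x) * t : kˣ) : k))).card := by
  classical
  have h := Finset.card_le_mul_card_image
    (f := fun x : ℕ => ((a ^ (x * x) * t : kˣ) : k)) (Finset.range p) 2 ?_
  · simpa using h
  · intro c hc
    obtain ⟨x₀, hx₀, hfx₀⟩ := Finset.mem_image.mp hc
    have hsub : {x ∈ Finset.range p | ((a ^ (x * x) * t : kˣ) : k) = c} ⊆ {x₀, p - x₀} := by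
      intro x hx
      rw [Finset.mem_filter] at hx
      obtain ⟨hxr, hxe⟩ := hx
      have he : (a ^ (x * x) * t : kˣ) = a ^ (x₀ * x₀) * t :=
        Units.ext (by rw [hxe, hfx₀])
      have hpow : a ^ (x * x) = a ^ (x₀ * x₀) := mul_right_cancel he
      have hmod : x * x ≡ x₀ * x₀ [MOD p] := by
        rw [← ho]; exact pow_eq_pow_iff_modEq.mp hpow
      rcases sq_mod_cases hp (Finset.mem_range.mp hxr) (Finset.mem_range.mp hx₀) hmod with
        h' | h'
      · exact Finset.mem_insert.mpr (Or.inl h')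
      · exact Finset.mem_insert.mpr (Or.inr (Finset.mem_singleton.mpr (by omega)))
    calc ({x ∈ Finset.range p | ((a ^ (x * x) * t : kˣ) : k) = c}).card
        ≤ ({x₀, p - x₀} : Finset ℕ).card := Finset.card_le_card hsub
      _ ≤ 2 := le_trans (Finset.card_insert_le _ _) (by simp)

end Aux2

/-- If `(G,q)` is an anisotropic pre-metric group with `q(g)^p = 1` for
all `g`, then `pG = 0` and `|G| ≤ p²`. -/
theorem anisotropic_with_p_torsion_values
    {k : Type*} [Field k] [IsAlgClosed k] [CharZero k]
    {G : Type*} [AddCommGroup G] [Finite G]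
    (p : ℕ) (hp : p.Prime)
    (q : G → kˣ) (hq : IsQuadForm q)
    (han : ∀ g : G, g ≠ 0 → q g ≠ 1)
    (hqp : ∀ g : G, q g ^ p = 1) :
    (∀ g : G, p • g = 0) ∧ Nat.card G ≤ p ^ 2 := by
  classical
  haveI := Fact.mk hp
  haveI : Fintype G := Fintype.ofFinite G
  have part1 : ∀ g : G, p • g = 0 := by
    intro g
    by_contra h0
    apply han _ h0
    rw [q_nsmul' hq, pow_mul, hqp, one_pow]
  refine ⟨part1, ?_⟩
  by_contra hcard
  push_neg at hcard
  rw [Nat.card_eq_fintype_card] at hcard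
  have hbT : ∀ g h : G, bchar q g h ^ p = 1 := by
    intro g h
    unfold bchar
    rw [mul_pow, mul_pow, inv_pow, inv_pow, hqp, hqp, hqp]
    simp
  have hnt : Nontrivial G := by
    rw [← Fintype.one_lt_card_iff_nontrivial]
    have := hp.two_le
    nlinarith
  obtain ⟨g₁, hg₁⟩ := exists_ne (0 : G)
  rcases hp.eq_two_or_odd' with rfl | hodd
  · -- p = 2
    norm_num at hcard
    have horder : ∀ g : G, g + g = 0 := by
      intro g; have h1 := part1 g; rwa [two_nsmul] at h1
    have hval : ∀ g : G, g ≠ 0 → ((q g : kˣ) : k) = -1 := by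
      intro g hg
      have h1 : ((q g ^ 2 : kˣ) : k) = 1 := by rw [hqp g, Units.val_one]
      have hk : ((q g : kˣ) : k) * ((q g : kˣ) : k) = 1 := by
        rw [← Units.val_mul, ← sq]; exact h1
      rcases mul_self_eq_one_iff.mp hk with h | h
      · exact absurd (Units.val_eq_one.mp h) (han g hg)
      · exact h
    have hsum_ne : ∀ u w : G, u ≠ 0 → w ≠ 0 → u ≠ w → u + w ≠ 0 := by
      intro u w hu hw huw h0
      apply huw
      have h1 : -w = w := neg_eq_of_add_eq_zero_left (horder w)
      have h2 : u = -w := eq_neg_of_add_eq_zero_left h0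
      rw [h2, h1]
    have hbval : ∀ u w : G, u ≠ 0 → w ≠ 0 → u ≠ w → ((bchar q u w : kˣ) : k) = -1 := by
      intro u w hu hw huw
      have h1 := congrArg Units.val (q_add' q u w)
      rw [Units.val_mul, Units.val_mul, hval _ (hsum_ne u w hu hw huw), hval _ hu, hval _ hw]
        at h1
      linear_combination -h1
    obtain ⟨h₁, hh₁⟩ : ∃ h₁ : G, h₁ ∉ ({0, g₁} : Finset G) := by
      by_contra hcc
      push_neg at hcc
      have h2 := Finset.card_le_card (fun x (_ : x ∈ Finset.univ) => hcc x)
      rw [Finset.card_univ] at h2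
      have i1 := Finset.card_insert_le (0 : G) ({g₁} : Finset G)
      have i2 : ({g₁} : Finset G).card = 1 := Finset.card_singleton _
      omega
    obtain ⟨h₂, hh₂⟩ : ∃ h₂ : G, h₂ ∉ ({0, g₁, h₁, g₁ + h₁} : Finset G) := by
      by_contra hcc
      push_neg at hcc
      have h2 := Finset.card_le_card (fun x (_ : x ∈ Finset.univ) => hcc x)
      rw [Finset.card_univ] at h2
      have i1 := Finset.card_insert_le (0 : G) ({g₁, h₁, g₁ + h₁} : Finset G)
      have i2 := Finset.card_insert_le g₁ ({h₁, g₁ + h₁} : Finset G)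
      have i3 := Finset.card_insert_le h₁ ({g₁ + h₁} : Finset G)
      have i4 : ({g₁ + h₁} : Finset G).card = 1 := Finset.card_singleton _
      omega
    simp only [Finset.mem_insert, Finset.mem_singleton, not_or] at hh₁ hh₂
    obtain ⟨h10, h1g⟩ := hh₁
    obtain ⟨h20, h2g, h2h1, h2gh⟩ := hh₂
    have hsum12 : h₁ + h₂ ≠ 0 := hsum_ne _ _ h10 h20 (Ne.symm h2h1)
    have hg1sum : g₁ ≠ h₁ + h₂ := by
      intro h
      apply h2gh
      have h3 : h₁ + g₁ = h₂ := by rw [h, ← add_assoc, horder h₁, zero_add]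
      rw [← h3, add_comm]
    have e := congrArg Units.val (hq.bchar_add_right g₁ h₁ h₂)
    rw [Units.val_mul, hbval g₁ (h₁ + h₂) hg₁ hsum12 hg1sum,
      hbval g₁ h₁ hg₁ h10 (Ne.symm h1g), hbval g₁ h₂ hg₁ h20 (Ne.symm h2g)] at e
    norm_num at e
  · -- p odd
    have hpne2 : p ≠ 2 := by
      rintro rfl
      exact (by norm_num : ¬ Odd 2) hodd
    obtain ⟨g₂, hg₂0, hb12, -⟩ := exists_perp' hq hp hbT hcard g₁ g₁
    obtain ⟨g₃, hg₃0, hb13, hb23⟩ := exists_perp' hq hp hbT hcard g₁ g₂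
    have hq1 : q g₁ ≠ 1 := han _ hg₁
    have hq2 : q g₂ ≠ 1 := han _ hg₂0
    have ho1 : orderOf (q g₁) = p := orderOf_eq_prime (hqp g₁) hq1
    have ho2' : orderOf (q g₂) = p := orderOf_eq_prime (hqp g₂) hq2
    have ho2 : orderOf ((q g₂)⁻¹) = p := by rw [orderOf_inv]; exact ho2'
    set T : Finset k := (Polynomial.nthRoots p (1 : k)).toFinset with hT
    have hTcard : T.card ≤ p :=
      le_trans (Multiset.toFinset_card_le _) (Polynomial.card_nthRoots p 1)
    have hmem : ∀ x : kˣ, x ^ p = 1 → (x : k) ∈ T := by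
      intro x hx
      rw [hT, Multiset.mem_toFinset, Polynomial.mem_nthRoots hp.pos]
      have h1 : ((x ^ p : kˣ) : k) = 1 := by rw [hx, Units.val_one]
      simpa [Units.val_pow_eq_pow_val] using h1
    set A := (Finset.range p).image (fun x : ℕ => ((q g₁ ^ (x * x) * 1 : kˣ) : k)) with hA
    set B := (Finset.range p).image
      (fun y : ℕ => (((q g₂)⁻¹ ^ (y * y) * (q g₃)⁻¹ : kˣ) : k)) with hB
    have hAcard : p ≤ 2 * A.card := image_card_big hp 1 ho1
    have hBcard : p ≤ 2 * B.card := image_card_big hp (q g₃)⁻¹ ho2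
    have hAT : A ⊆ T := by
      intro c hc
      rw [hA] at hc
      obtain ⟨x, -, rfl⟩ := Finset.mem_image.mp hc
      apply hmem
      rw [mul_one, ← pow_mul, mul_comm (x * x) p, pow_mul, hqp, one_pow]
    have hBT : B ⊆ T := by
      intro c hc
      rw [hB] at hc
      obtain ⟨y, -, rfl⟩ := Finset.mem_image.mp hc
      apply hmem
      rw [mul_pow, ← pow_mul, mul_comm (y * y) p, pow_mul, inv_pow (q g₂) p,
        inv_pow (q g₃) p, hqp, hqp, inv_one, one_pow, one_mul]
    have hABdisj : ¬ Disjoint A B := by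
      intro hd
      have h2 := Finset.card_le_card (Finset.union_subset hAT hBT)
      rw [Finset.card_union_of_disjoint hd] at h2
      obtain ⟨m, hm⟩ := hodd
      omega
    obtain ⟨c, hcA, hcB⟩ := Finset.not_disjoint_iff.mp hABdisj
    rw [hA] at hcA
    rw [hB] at hcB
    obtain ⟨x, hxr, hxe⟩ := Finset.mem_image.mp hcA
    obtain ⟨y, hyr, hye⟩ := Finset.mem_image.mp hcB
    have hux : (q g₁ ^ (x * x) * 1 : kˣ) = (q g₂)⁻¹ ^ (y * y) * (q g₃)⁻¹ :=
      Units.ext (by rw [hxe, hye])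
    rw [mul_one] at hux
    have hkey : q g₁ ^ (x * x) * (q g₂ ^ (y * y) * q g₃) = 1 := by
      rw [hux, inv_pow, ← mul_inv]
      exact inv_mul_cancel _
    have hvne : x • g₁ + (y • g₂ + g₃) ≠ 0 := by
      intro h0
      have hx0 : x = 0 := by
        have e1 : bchar q g₁ (x • g₁ + (y • g₂ + g₃)) = 1 := by
          rw [h0]; exact bchar_zero_right' hq g₁
        rw [hq.bchar_add_right, hq.bchar_add_right, bchar_nsmul_right' hq,
          bchar_nsmul_right' hq, bchar_self' hq, hb12, hb13] at e1
        simp only [one_pow, mul_one] at e1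
        have hdvd : p ∣ 2 * x := by
          rw [← ho1]
          apply orderOf_dvd_of_pow_eq_one
          rw [pow_mul, sq]
          exact e1
        rcases (Nat.Prime.dvd_mul hp).mp hdvd with h2 | h2
        · exact absurd ((Nat.prime_dvd_prime_iff_eq hp Nat.prime_two).mp h2) hpne2
        · exact Nat.eq_zero_of_dvd_of_lt h2 (Finset.mem_range.mp hxr)
      have hy0 : y = 0 := by
        have e1 : bchar q g₂ (x • g₁ + (y • g₂ + g₃)) = 1 := by
          rw [h0]; exact bchar_zero_right' hq g₂
        have hb21 : bchar q g₂ g₁ = 1 := (bchar_comm' q g₂ g₁).trans hb12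
        rw [hq.bchar_add_right, hq.bchar_add_right, bchar_nsmul_right' hq,
          bchar_nsmul_right' hq, bchar_self' hq, hb21, hb23] at e1
        simp only [one_pow, mul_one, one_mul] at e1
        have hdvd : p ∣ 2 * y := by
          rw [← ho2']
          apply orderOf_dvd_of_pow_eq_one
          rw [pow_mul, sq]
          exact e1
        rcases (Nat.Prime.dvd_mul hp).mp hdvd with h2 | h2
        · exact absurd ((Nat.prime_dvd_prime_iff_eq hp Nat.prime_two).mp h2) hpne2
        · exact Nat.eq_zero_of_dvd_of_lt h2 (Finset.mem_range.mp hyr)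
      rw [hx0, hy0, zero_smul, zero_smul, zero_add, zero_add] at h0
      exact hg₃0 h0
    apply han _ hvne
    rw [q_add' q (x • g₁) (y • g₂ + g₃), q_add' q (y • g₂) g₃, q_nsmul' hq, q_nsmul' hq,
      bchar_nsmul_left' hq x g₁ (y • g₂ + g₃), bchar_nsmul_left' hq y g₂ g₃,
      hq.bchar_add_right, bchar_nsmul_right' hq, hb12, hb13, hb23]
    simp only [one_pow, mul_one]
    exact hkey
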